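/- Let (X_n) be a sequence of nonempty finite sets with |X_n| → ∞, d_n the normalized Hamming distance on the symmetric groups Sym(X_n), and U a nonprincipal ultrafilter on ℕ. If G is a countable group admitting an injective group homomorphism into the metric ultraproduct ∏_U (Sym(X_n), d_n) such that any two distinct elements of G map to elements at distance 1, then G is sofic. -/

import Mathlib

open scoped Classical Pointwise

noncomputable def hDist {A : Type*} [Fintype A] (σ τ : Equiv.Perm A) : ℝ :=
  ((Finset.univ.filter fun a => σ a ≠ τ a).card : ℝ) / (Fintype.card A : ℝ)

/-- `φ : G → Sym(Fin n)` is an `(F, E, ε)`-orbit approximation of the action `α : G ↷ X`. -/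
def IsOrbitApprox {G X : Type*} [Group G] {n : ℕ} (α : G →* Equiv.Perm X)
    (F : Finset G) (E : Finset X) (ε : ℝ) (φ : G → Equiv.Perm (Fin n)) : Prop :=
  ∃ (m : ℕ) (S : Finset (Fin n)) (π : Fin n → X → Fin m),
    ((S.card : ℝ) > (1 - ε) * (n : ℝ)) ∧
    (∀ s ∈ S, Set.InjOn (π s) (E : Set X)) ∧
    (∀ s ∈ S, ∀ g ∈ F, ∀ x ∈ E, φ g s ∈ S → α g⁻¹ x ∈ E →
      π (φ g s) x = π s (α g⁻¹ x))

/-- Soficity of an action `α : G ↷ X` given as a homomorphism `G →* Sym(X)`. -/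
def SoficAction {G X : Type*} [Group G] (α : G →* Equiv.Perm X) : Prop :=
  ∀ (F : Finset G) (E : Finset X) (ε : ℝ), 0 < ε →
    ∃ (n : ℕ) (φ : G → Equiv.Perm (Fin n)),
      φ 1 = 1 ∧
      (∀ g ∈ F, ∀ h ∈ F, hDist (φ (g * h)) (φ g * φ h) < ε) ∧
      IsOrbitApprox α F E ε φ

/-- Soficity of a group. -/
def SoficGroup (G : Type*) [Group G] : Prop :=
  ∀ (F : Finset G) (ε : ℝ), 0 < ε →
    ∃ (n : ℕ) (φ : G → Equiv.Perm (Fin n)),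
      φ 1 = 1 ∧
      (∀ g ∈ F, ∀ h ∈ F, hDist (φ (g * h)) (φ g * φ h) < ε) ∧
      (∀ g ∈ F, g ≠ 1 → hDist 1 (φ g) > 1 - ε)

lemma hDist_comm {A : Type*} [Fintype A] (σ τ : Equiv.Perm A) : hDist σ τ = hDist τ σ := by
  unfold hDist
  congr 3
  ext a
  simp [ne_comm]

lemma hDist_mul_left {A : Type*} [Fintype A] (ρ σ τ : Equiv.Perm A) :
    hDist (ρ * σ) (ρ * τ) = hDist σ τ := by
  unfold hDist
  congr 3
  ext a
  simp [Equiv.Perm.mul_apply]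

lemma hDist_mul_right {A : Type*} [Fintype A] (ρ σ τ : Equiv.Perm A) :
    hDist (σ * ρ) (τ * ρ) = hDist σ τ := by
  unfold hDist
  congr 2
  apply Finset.card_bij' (fun a _ => ρ a) (fun a _ => ρ⁻¹ a) <;>
    simp [Equiv.Perm.mul_apply]
  · intro a ha; exact (Finset.mem_filter.mp ha).2
  · intro a ha; exact Finset.mem_filter.mpr ⟨Finset.mem_univ _, by simpa using ha⟩

lemma hDist_triangle {A : Type*} [Fintype A] (σ τ υ : Equiv.Perm A) :
    hDist σ υ ≤ hDist σ τ + hDist τ υ := by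
  by_cases hN : (Fintype.card A : ℝ) = 0
  · simp [hDist, hN]
  · have hN' : (0:ℝ) < Fintype.card A :=
      lt_of_le_of_ne (Nat.cast_nonneg _) (Ne.symm hN)
    unfold hDist
    rw [← add_div, div_le_div_iff_of_pos_right hN']
    rw [← Nat.cast_add, Nat.cast_le]
    calc (Finset.univ.filter fun a => σ a ≠ υ a).card
        ≤ ((Finset.univ.filter fun a => σ a ≠ τ a) ∪
           (Finset.univ.filter fun a => τ a ≠ υ a)).card := by
          apply Finset.card_le_card
          intro a ha
          simp only [Finset.mem_filter, Finset.mem_union, Finset.mem_univ, true_and] at *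
          by_contra hc
          push_neg at hc
          exact ha (hc.1.trans hc.2)
      _ ≤ _ := Finset.card_union_le _ _

lemma hDist_permCongr {A B : Type*} [Fintype A] [Fintype B] (e : A ≃ B)
    (σ τ : Equiv.Perm A) :
    hDist (e.permCongr σ) (e.permCongr τ) = hDist σ τ := by
  unfold hDist
  rw [Fintype.card_congr e.symm]
  congr 3
  apply Finset.card_bij' (fun b _ => e.symm b) (fun a _ => e a) <;>
    simp [Equiv.permCongr_apply]

lemma permCongr_mul {A B : Type*} (e : A ≃ B) (σ τ : Equiv.Perm A) :
    e.permCongr (σ * τ) = e.permCongr σ * e.permCongr τ := by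
  ext x
  simp [Equiv.Perm.mul_apply]

lemma permCongr_one {A B : Type*} (e : A ≃ B) :
    e.permCongr (1 : Equiv.Perm A) = 1 := by
  ext x
  simp


lemma hDist_eq_one {A : Type*} [Fintype A] (σ τ : Equiv.Perm A) :
    hDist σ τ = hDist 1 (σ⁻¹ * τ) := by
  rw [← hDist_mul_left σ⁻¹ σ τ, inv_mul_cancel]

lemma hDist_one_inv {A : Type*} [Fintype A] (σ : Equiv.Perm A) :
    hDist 1 σ⁻¹ = hDist 1 σ := by
  rw [← hDist_mul_left σ, mul_one, mul_inv_cancel, hDist_comm]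

lemma hDist_one_mul_left {A : Type*} [Fintype A] (ρ σ : Equiv.Perm A) :
    hDist σ (ρ * σ) = hDist 1 ρ := by
  have := hDist_mul_right σ 1 ρ
  rwa [one_mul] at this

theorem stmt_16 {G : Type*} [Group G] [Countable G]
    (X : ℕ → Type) [∀ n, Fintype (X n)] [∀ n, Nonempty (X n)]
    (hcard : Filter.Tendsto (fun n => Fintype.card (X n)) Filter.atTop Filter.atTop)
    (U : Ultrafilter ℕ) (hU : ∀ s : Set ℕ, s.Finite → s ∉ U)
    (Φ : G → ∀ n, Equiv.Perm (X n))
    (hhom : ∀ g h : G, Filter.Tendsto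
      (fun n => hDist (Φ (g * h) n) (Φ g n * Φ h n)) (U : Filter ℕ) (nhds 0))
    (hsep : ∀ g h : G, g ≠ h → Filter.Tendsto
      (fun n => hDist (Φ g n) (Φ h n)) (U : Filter ℕ) (nhds 1)) :
    SoficGroup G := by
  intro F ε hε
  have hE : ∀ᶠ n in (U : Filter ℕ),
      (hDist (Φ 1 n) (Φ 1 n * Φ 1 n) < ε/2) ∧
      (∀ g ∈ F, ∀ h ∈ F, hDist (Φ (g*h) n) (Φ g n * Φ h n) < ε/2) ∧
      (∀ g ∈ F, g ≠ 1 → hDist (Φ g n) (Φ 1 n) > 1 - ε) := by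
    refine Filter.Eventually.and ?_ (Filter.Eventually.and ?_ ?_)
    · simpa using (hhom 1 1).eventually_lt_const (by linarith)
    · rw [Filter.eventually_all_finset]
      intro g hg
      rw [Filter.eventually_all_finset]
      intro h hh
      exact (hhom g h).eventually_lt_const (by linarith)
    · rw [Filter.eventually_all_finset]
      intro g hg
      rcases eq_or_ne g 1 with rfl | hg1
      · filter_upwards with n h; exact absurd rfl h
      · filter_upwards [(hsep g 1 hg1).eventually_const_lt (by linarith : 1 - ε < 1)]
          with n hn _ using hn
  obtain ⟨n, hn1, hn2, hn3⟩ := hE.exists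
  set e : X n ≃ Fin (Fintype.card (X n)) := Fintype.equivFin (X n) with he
  refine ⟨Fintype.card (X n), fun g => e.permCongr ((Φ 1 n)⁻¹ * Φ g n), ?_, ?_, ?_⟩
  · show e.permCongr ((Φ 1 n)⁻¹ * Φ 1 n) = 1
    rw [inv_mul_cancel, permCongr_one]
  · intro g hg h hh
    have key1 : hDist (1 : Equiv.Perm (X n)) (Φ 1 n) < ε/2 := by
      rwa [hDist_one_mul_left] at hn1
    calc hDist (e.permCongr ((Φ 1 n)⁻¹ * Φ (g*h) n))
          (e.permCongr ((Φ 1 n)⁻¹ * Φ g n) * e.permCongr ((Φ 1 n)⁻¹ * Φ h n))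
        = hDist ((Φ 1 n)⁻¹ * Φ (g*h) n)
            ((Φ 1 n)⁻¹ * (Φ g n * ((Φ 1 n)⁻¹ * Φ h n))) := by
          rw [← permCongr_mul, hDist_permCongr, mul_assoc]
      _ = hDist (Φ (g*h) n) (Φ g n * ((Φ 1 n)⁻¹ * Φ h n)) := hDist_mul_left _ _ _
      _ ≤ hDist (Φ (g*h) n) (Φ g n * Φ h n)
          + hDist (Φ g n * Φ h n) (Φ g n * ((Φ 1 n)⁻¹ * Φ h n)) := hDist_triangle _ _ _
      _ < ε/2 + ε/2 := by
          apply add_lt_add (hn2 g hg h hh)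
          have h2 : hDist (Φ g n * Φ h n) (Φ g n * ((Φ 1 n)⁻¹ * Φ h n))
              = hDist (1 : Equiv.Perm (X n)) (Φ 1 n) := by
            rw [hDist_mul_left, hDist_one_mul_left, hDist_one_inv]
          rw [h2]; exact key1
      _ = ε := by ring
  · intro g hg hg1
    have : (1 : Equiv.Perm (Fin (Fintype.card (X n)))) = e.permCongr 1 :=
      (permCongr_one e).symm
    rw [this, hDist_permCongr]
    rw [← hDist_eq_one, hDist_comm]
    exact hn3 g hg hg1
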